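/- In the three-state Markov chain with states s₁, s₂, s₃ where s₁ goes to s₂ with probability 1, s₂ goes to s₂ with probability 1/2 and to s₃ with probability 1/2, and s₃ goes to s₁ with probability 1, starting from s₁, for every fixed λ ≥ 1 the probability that the run satisfies the fixed window parity objective with window size λ (priorities p(s₁)=1, p(s₂)=2, p(s₃)=0) is 0. Equivalently: almost surely, there are infinitely many visits to s₁ that are followed by at least λ consecutive steps before visiting s₃. -/

import Mathlib

open MeasureTheory
open scoped Classical

/-- Transition matrix of the three-state Markov chain: `s₁ → s₂` w.p. 1,
`s₂ → s₂` w.p. 1/2, `s₂ → s₃` w.p. 1/2, `s₃ → s₁` w.p. 1. -/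
noncomputable def P3 : Fin 3 → Fin 3 → ENNReal := ![![0, 1, 0], ![0, 1/2, 1/2], ![1, 0, 0]]

/-- Priority function: `p(s₁) = 1`, `p(s₂) = 2`, `p(s₃) = 0`. -/
def prio3 : Fin 3 → ℕ := ![1, 2, 0]

namespace FWAux
variable (lam : ℕ)

def step (a : Fin 3) (c : ℕ) : ℕ := if a = 0 then 0 else if a = 1 then min (c+1) lam else lam

noncomputable def U : ℕ → Fin 3 → ℕ → ℕ → ENNReal
  | 0, _s, c, r => if r = 0 ∧ c = lam - 1 then 0 else 1
  | m+1, s, c, r => if r = 0 ∧ c = lam - 1 then 0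
      else ∑ a : Fin 3, P3 s a * U m a (step lam a c) (r-1)

lemma rowsum (s : Fin 3) : ∑ a : Fin 3, P3 s a = 1 := by
  fin_cases s <;> simp [P3, Fin.sum_univ_three, ENNReal.inv_two_add_inv_two]

lemma U_le_one : ∀ m s c r, U lam m s c r ≤ 1 := by
  intro m
  induction m with
  | zero => intro s c r; rw [U]; split <;> simp
  | succ m ih =>
    intro s c r
    rw [U]
    split
    · simp
    · calc ∑ a : Fin 3, P3 s a * U lam m a (step lam a c) (r-1)
          ≤ ∑ a : Fin 3, P3 s a * 1 :=
            Finset.sum_le_sum fun a _ => mul_le_mul_right (ih _ _ _) _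
      _ = 1 := by simp [rowsum]

lemma U_succ_s0 (m c r : ℕ) : U lam (m+1) 0 c r =
    if r = 0 ∧ c = lam - 1 then 0 else U lam m 1 (min (c+1) lam) (r-1) := by
  rw [U]
  congr 1
  simp [P3, Fin.sum_univ_three, step]

lemma U_succ_s1 (m c r : ℕ) : U lam (m+1) 1 c r =
    if r = 0 ∧ c = lam - 1 then 0 else
      2⁻¹ * U lam m 1 (min (c+1) lam) (r-1) + 2⁻¹ * U lam m 2 lam (r-1) := by
  rw [U]
  congr 1
  simp [P3, Fin.sum_univ_three, step]

lemma U_succ_s2 (m c r : ℕ) : U lam (m+1) 2 c r =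
    if r = 0 ∧ c = lam - 1 then 0 else U lam m 0 0 (r-1) := by
  rw [U]
  congr 1
  simp [P3, Fin.sum_univ_three, step]

/-- decay rate -/
noncomputable def q : ENNReal := 1 - 2⁻¹ ^ lam

lemma q_ne_top : q lam ≠ ⊤ := ENNReal.sub_ne_top ENNReal.one_ne_top

lemma q_le_one : q lam ≤ 1 := tsub_le_self

lemma half_add_half (a : ENNReal) : 2⁻¹ * a + 2⁻¹ * a = a := by
  rw [← add_mul, ENNReal.inv_two_add_inv_two, one_mul]

lemma claimA (hlam : 1 ≤ lam) : ∀ N m, (lam+1)*N ≤ m → U lam m 0 0 0 ≤ (q lam)^N := by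
  intro N
  induction N with
  | zero => intro m _; simpa using U_le_one lam m 0 0 0
  | succ N ihA =>
    -- auxiliary claim C at level N
    have hC : ∀ d, d ≤ lam - 1 → ∀ m, (lam+1)*N + 2 + d ≤ m →
        U lam m 1 (lam-1-d) 0 + 2⁻¹^d * (q lam)^N ≤ (q lam)^N := by
      intro d
      induction d with
      | zero =>
        intro _ m _
        have h0 : U lam m 1 (lam-1) 0 = 0 := by
          cases m with
          | zero => rw [U]; simp
          | succ m => rw [U]; simp
        simpa [h0]
      | succ d ihd =>
        intro hd m hm
        by_cases hc : lam - 1 - (d+1) = lam - 1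
        · -- degenerate: then lam - 1 ≤ d+1; counter equals lam-1 so U = 0? no:
          have h0 : U lam m 1 (lam-1-(d+1)) 0 = 0 := by
            rw [hc]
            cases m with
            | zero => rw [U]; simp
            | succ m => rw [U]; simp
          rw [h0, zero_add]
          calc 2⁻¹^(d+1) * (q lam)^N ≤ 1 * (q lam)^N := by
                gcongr
                exact pow_le_one' (by simp) _
            _ = (q lam)^N := one_mul _
        · obtain ⟨m', rfl⟩ : ∃ m', m = m' + 1 := ⟨m - 1, by omega⟩
          obtain ⟨m'', rfl⟩ : ∃ k, m' = k + 1 := ⟨m' - 1, by omega⟩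
          have hlam2 : lam - 1 - (d+1) + 1 = lam - 1 - d := by omega
          have hmin : min (lam - 1 - (d+1) + 1) lam = lam - 1 - d := by omega
          rw [U_succ_s1, if_neg (by simp [hc]), hmin]
          have h2 : U lam (m''+1) 2 lam 0 ≤ (q lam)^N := by
            rw [U_succ_s2, if_neg (by omega)]
            exact ihA m'' (by omega)
          have h1 := ihd (by omega) (m''+1) (by omega)
          calc 2⁻¹ * U lam (m''+1) 1 (lam-1-d) 0 + 2⁻¹ * U lam (m''+1) 2 lam 0
                + 2⁻¹^(d+1) * (q lam)^N
              = 2⁻¹ * (U lam (m''+1) 1 (lam-1-d) 0 + 2⁻¹^d * (q lam)^N)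
                + 2⁻¹ * U lam (m''+1) 2 lam 0 := by ring
            _ ≤ 2⁻¹ * (q lam)^N + 2⁻¹ * (q lam)^N := by gcongr
            _ = (q lam)^N := half_add_half _
    intro m hm
    have hexp : (lam+1)*(N+1) = (lam+1)*N + (lam+1) := by ring
    rw [hexp] at hm
    obtain ⟨m', rfl⟩ : ∃ m', m = m' + 1 := ⟨m - 1, by omega⟩
    by_cases h1 : lam = 1
    · rw [U_succ_s0, if_pos (by omega)]
      exact zero_le
    · have hlam2 : 2 ≤ lam := by omega
      rw [U_succ_s0, if_neg (by omega)]
      have hmin : min (0+1) lam = lam - 1 - (lam - 2) := by omega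
      rw [hmin]
      have := hC (lam - 2) (by omega) m' (by omega)
      have hU : U lam m' 1 (lam-1-(lam-2)) 0 ≤ (q lam)^N - 2⁻¹^(lam-2) * (q lam)^N :=
        ENNReal.le_sub_of_add_le_right
          (ENNReal.mul_ne_top (ENNReal.pow_ne_top (by simp)) (ENNReal.pow_ne_top (q_ne_top lam))) this
      calc U lam m' 1 (lam-1-(lam-2)) 0 ≤ (q lam)^N - 2⁻¹^(lam-2) * (q lam)^N := hU
        _ ≤ (q lam)^N - 2⁻¹^lam * (q lam)^N :=
            tsub_le_tsub_left (mul_le_mul_left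
              (pow_le_pow_right_of_le_one' (by simp : (2⁻¹:ENNReal) ≤ 1) (by omega)) _) _
        _ = (q lam)^(N+1) := by
            rw [pow_succ, mul_comm ((q lam)^N) (q lam), q, ENNReal.sub_mul (by simp), one_mul]

lemma claimG2 (hlam : 1 ≤ lam) : ∀ k N m c, k + (lam+1)*N + 2 ≤ m →
    U lam m 1 c 0 ≤ 2⁻¹^k + (q lam)^N := by
  intro k
  induction k with
  | zero =>
    intro N m c _
    calc U lam m 1 c 0 ≤ 1 := U_le_one lam m 1 c 0
      _ ≤ 2⁻¹^0 + (q lam)^N := by simp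
  | succ k ih =>
    intro N m c hm
    obtain ⟨m2, rfl⟩ : ∃ m2, m = m2 + 2 := ⟨m - 2, by omega⟩
    rw [U_succ_s1]
    split
    · exact zero_le
    have h2 : U lam (m2+1) 2 lam 0 ≤ (q lam)^N := by
      rw [U_succ_s2, if_neg (by omega)]
      exact claimA lam hlam N m2 (by omega)
    have h1 : U lam (m2+1) 1 (min (c+1) lam) 0 ≤ 2⁻¹^k + (q lam)^N :=
      ih N (m2+1) _ (by omega)
    calc 2⁻¹ * U lam (m2+1) 1 (min (c+1) lam) 0 + 2⁻¹ * U lam (m2+1) 2 lam 0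
        ≤ 2⁻¹ * (2⁻¹^k + (q lam)^N) + 2⁻¹ * (q lam)^N := by gcongr
      _ = 2⁻¹^(k+1) + (2⁻¹ * (q lam)^N + 2⁻¹ * (q lam)^N) := by ring
      _ = 2⁻¹^(k+1) + (q lam)^N := by rw [half_add_half]

lemma claimGRACE (hlam : 1 ≤ lam) : ∀ r N m s c, (s = 0 → c = 0) → (s = 2 → c = lam) →
    (lam+2)*N + 3 + r ≤ m → U lam m s c r ≤ 2⁻¹^N + (q lam)^N := by
  intro r
  induction r with
  | zero =>
    intro N m s c h0 h2 hm
    have hmul : (lam+2)*N = N + (lam+1)*N := by ring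
    have h3 : ∀ x : Fin 3, x = 0 ∨ x = 1 ∨ x = 2 := by decide
    rcases h3 s with rfl | rfl | rfl
    · rw [h0 rfl]
      exact le_trans (claimA lam hlam N m (by omega)) (le_add_self)
    · exact claimG2 lam hlam N N m c (by omega)
    · rw [h2 rfl]
      obtain ⟨m', rfl⟩ : ∃ m', m = m' + 1 := ⟨m - 1, by omega⟩
      rw [U_succ_s2, if_neg (by omega)]
      exact le_trans (claimA lam hlam N m' (by omega)) (le_add_self)
  | succ r ih =>
    intro N m s c h0 h2 hm
    obtain ⟨m', rfl⟩ : ∃ m', m = m' + 1 := ⟨m - 1, by omega⟩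
    rw [U, if_neg (by omega)]
    calc ∑ a : Fin 3, P3 s a * U lam m' a (step lam a c) (r+1-1)
        ≤ ∑ a : Fin 3, P3 s a * (2⁻¹^N + (q lam)^N) := by
          refine Finset.sum_le_sum fun a _ => mul_le_mul_right ?_ _
          have hr : r + 1 - 1 = r := rfl
          rw [hr]
          refine ih N m' a (step lam a c) ?_ ?_ (by omega)
          · intro ha; rw [ha]; simp [step]
          · intro ha; rw [ha]; simp [step]
      _ = 2⁻¹^N + (q lam)^N := by rw [← Finset.sum_mul, rowsum, one_mul]

lemma U_final (hlam : 1 ≤ lam) (R N : ℕ) :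
    U lam ((lam+2)*N + 3 + R) 0 0 R ≤ 2⁻¹^N + (q lam)^N :=
  claimGRACE lam hlam R N _ 0 0 (fun _ => rfl) (fun h => absurd h (by decide)) le_rfl

lemma q_lt_one (hlam : 1 ≤ lam) : q lam < 1 := by
  rw [q]
  have hpos : (2⁻¹:ENNReal) ^ lam ≠ 0 := by
    apply pow_ne_zero
    simp
  exact ENNReal.sub_lt_self ENNReal.one_ne_top one_ne_zero hpos

lemma bound_tendsto (hlam : 1 ≤ lam) :
    Filter.Tendsto (fun N => 2⁻¹^N + (q lam)^N) Filter.atTop (nhds 0) := by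
  have h1 := ENNReal.tendsto_pow_atTop_nhds_zero_of_lt_one (by norm_num : (2⁻¹:ENNReal) < 1)
  have h2 := ENNReal.tendsto_pow_atTop_nhds_zero_of_lt_one (q_lt_one lam hlam)
  simpa using h1.add h2

/-! ## words, counters, weights -/

def cntN (ρ : ℕ → Fin 3) (c : ℕ) : ℕ → ℕ
  | 0 => c
  | t+1 => step lam (ρ (t+1)) (cntN ρ c t)

def cntL : ℕ → List (Fin 3) → ℕ → ℕ
  | c, _, 0 => c
  | c, [], _+1 => c
  | c, a :: l, t+1 => cntL (step lam a c) l t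

noncomputable def wl : Fin 3 → List (Fin 3) → ENNReal
  | _, [] => 1
  | s, a :: l => P3 s a * wl a l

def AliveL (c r : ℕ) (l : List (Fin 3)) : Prop :=
  ∀ t ≤ l.length, r ≤ t → cntL lam c l t ≠ lam - 1

lemma AliveL_nil (c r : ℕ) : AliveL lam c r [] ↔ (r = 0 → c ≠ lam - 1) := by
  constructor
  · intro h hr
    have := h 0 (le_refl 0) (by omega)
    simpa [cntL] using this
  · intro h t ht hr
    have ht0 : t = 0 := by simpa using ht
    subst ht0
    have hr0 : r = 0 := by omega
    simpa [cntL] using h hr0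

lemma AliveL_cons (c r : ℕ) (a : Fin 3) (l : List (Fin 3)) :
    AliveL lam c r (a :: l) ↔ (r = 0 → c ≠ lam - 1) ∧ AliveL lam (step lam a c) (r-1) l := by
  constructor
  · intro h
    refine ⟨fun hr => by simpa [cntL] using h 0 (by simp) (by omega), ?_⟩
    intro t ht hr
    have := h (t+1) (by simpa using ht) (by omega)
    simpa [cntL] using this
  · rintro ⟨h0, h⟩ t ht hr
    cases t with
    | zero => simpa [cntL] using h0 (by omega)
    | succ t =>
      have := h t (by simpa using ht) (by omega)
      simpa [cntL] using this

lemma ofFn_cons {m : ℕ} (a : Fin 3) (v : Fin m → Fin 3) :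
    List.ofFn (Fin.cons a v) = a :: List.ofFn v := by
  simp [List.ofFn_succ]

lemma sumkey : ∀ m c r (s : Fin 3),
    (∑ v : Fin m → Fin 3,
      if AliveL lam c r (List.ofFn v) then wl s (List.ofFn v) else 0) = U lam m s c r := by
  intro m
  induction m with
  | zero =>
    intro c r s
    rw [Fintype.sum_unique]
    rw [U]
    simp only [List.ofFn_zero]
    by_cases hg : r = 0 ∧ c = lam - 1
    · rw [if_pos hg, if_neg]
      rw [AliveL_nil]
      push_neg
      exact ⟨hg.1, hg.2⟩
    · rw [if_neg hg, if_pos]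
      · rfl
      · rw [AliveL_nil]; intro h1 h2; exact hg ⟨h1, h2⟩
  | succ m ih =>
    intro c r s
    have hre := (Equiv.sum_comp (Fin.consEquiv (fun _ : Fin (m+1) => Fin 3))
      (fun v : Fin (m+1) → Fin 3 =>
        if AliveL lam c r (List.ofFn v) then wl s (List.ofFn v) else 0)).symm
    rw [hre, Fintype.sum_prod_type]
    rw [U]
    by_cases hg : r = 0 ∧ c = lam - 1
    · rw [if_pos hg]
      refine Finset.sum_eq_zero fun a _ => Finset.sum_eq_zero fun v _ => ?_
      rw [if_neg]
      show ¬ AliveL lam c r (List.ofFn (Fin.consEquiv _ (a, v)))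
      have : (Fin.consEquiv (fun _ : Fin (m+1) => Fin 3)) (a, v) = Fin.cons a v := rfl
      rw [this, ofFn_cons, AliveL_cons]
      rintro ⟨h0, -⟩
      exact h0 hg.1 hg.2
    · rw [if_neg hg]
      refine Finset.sum_congr rfl fun a _ => ?_
      have hstep : ∀ v : Fin m → Fin 3,
          (if AliveL lam c r (List.ofFn ((Fin.consEquiv fun _ : Fin (m+1) => Fin 3) (a, v)))
            then wl s (List.ofFn ((Fin.consEquiv fun _ : Fin (m+1) => Fin 3) (a, v))) else 0)
          = P3 s a * (if AliveL lam (step lam a c) (r-1) (List.ofFn v)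
              then wl a (List.ofFn v) else 0) := by
        intro v
        have hcv : (Fin.consEquiv fun _ : Fin (m+1) => Fin 3) (a, v) = Fin.cons a v := rfl
        rw [hcv, ofFn_cons]
        by_cases hA : AliveL lam (step lam a c) (r-1) (List.ofFn v)
        · rw [if_pos, if_pos hA]
          · rfl
          · rw [AliveL_cons]; exact ⟨fun h1 h2 => hg ⟨h1, h2⟩, hA⟩
        · rw [if_neg, if_neg hA, mul_zero]
          rw [AliveL_cons]; rintro ⟨-, h⟩; exact hA h
      rw [Finset.sum_congr rfl (fun v _ => hstep v), ← Finset.mul_sum, ih]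

lemma prod_wl : ∀ (l : List (Fin 3)) (s : Fin 3) (f : ℕ → Fin 3), f 0 = s →
    (∀ j < l.length, f (j+1) = l.getD j 0) →
    ∏ i ∈ Finset.range l.length, P3 (f i) (f (i+1)) = wl s l := by
  intro l
  induction l with
  | nil => intro s f _ _; simp [wl]
  | cons a t iht =>
    intro s f h0 hf
    have h1 : f 1 = a := by simpa using hf 0 (by simp)
    rw [List.length_cons, Finset.prod_range_succ']
    have htail : ∏ i ∈ Finset.range t.length, P3 (f (i+1)) (f (i+1+1)) = wl a t := by
      refine iht a (fun k => f (k+1)) h1 ?_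
      intro j hj
      have := hf (j+1) (by simpa using Nat.succ_lt_succ hj)
      simpa [List.getD_cons_succ] using this
    rw [htail, h0, h1, wl, mul_comm]

lemma cntN_shift (ρ : ℕ → Fin 3) (c : ℕ) :
    ∀ t, cntN lam (fun k => ρ (k+1)) (step lam (ρ 1) c) t = cntN lam ρ c (t+1) := by
  intro t
  induction t with
  | zero => rfl
  | succ t ih => rw [cntN, ih]; rfl

lemma cntL_eq_cntN : ∀ (l : List (Fin 3)) (c : ℕ) (ρ : ℕ → Fin 3),
    (∀ j < l.length, ρ (j+1) = l.getD j 0) →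
    ∀ t ≤ l.length, cntL lam c l t = cntN lam ρ c t := by
  intro l
  induction l with
  | nil =>
    intro c ρ _ t ht
    have : t = 0 := by simpa using ht
    subst this; rfl
  | cons a tl ih =>
    intro c ρ hρ t ht
    cases t with
    | zero => rfl
    | succ t =>
      have ha : ρ 1 = a := by simpa using hρ 0 (by simp)
      have htl : ∀ j < tl.length, (fun k => ρ (k+1)) (j+1) = tl.getD j 0 := by
        intro j hj
        have := hρ (j+1) (by simpa using Nat.succ_lt_succ hj)
        simpa [List.getD_cons_succ] using this
      have := ih (step lam a c) (fun k => ρ (k+1)) htl t (by simpa using ht)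
      calc cntL lam c (a :: tl) (t+1) = cntL lam (step lam a c) tl t := rfl
        _ = cntN lam (fun k => ρ (k+1)) (step lam a c) t := this
        _ = cntN lam ρ c (t+1) := by rw [← ha]; exact cntN_shift lam ρ c t

lemma struct (ρ : ℕ → Fin 3) (h0 : ρ 0 = 0) : ∀ t, cntN lam ρ 0 t < lam →
    cntN lam ρ 0 t ≤ t ∧ ρ (t - cntN lam ρ 0 t) = 0 ∧ ∀ j < cntN lam ρ 0 t, ρ (t - j) = 1 := by
  have h3 : ∀ x : Fin 3, x = 0 ∨ x = 1 ∨ x = 2 := by decide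
  intro t
  induction t with
  | zero =>
    intro _
    refine ⟨le_refl 0, by simpa [cntN] using h0, ?_⟩
    intro j hj
    simp [cntN] at hj
  | succ t ih =>
    intro hlt
    rcases h3 (ρ (t+1)) with ha | ha | ha
    · have hc : cntN lam ρ 0 (t+1) = 0 := by rw [cntN, ha]; simp [step]
      rw [hc]
      exact ⟨Nat.zero_le _, by simpa using ha, fun j hj => absurd hj (Nat.not_lt_zero j)⟩
    · have hc : cntN lam ρ 0 (t+1) = min (cntN lam ρ 0 t + 1) lam := by
        rw [cntN, ha]; simp [step]
      rw [hc] at hlt ⊢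
      have hmin : min (cntN lam ρ 0 t + 1) lam = cntN lam ρ 0 t + 1 := by omega
      rw [hmin] at hlt ⊢
      obtain ⟨hct, hz, hones⟩ := ih (by omega)
      refine ⟨by omega, ?_, ?_⟩
      · have : t + 1 - (cntN lam ρ 0 t + 1) = t - cntN lam ρ 0 t := by omega
        rw [this]; exact hz
      · intro j hj
        cases j with
        | zero => simpa using ha
        | succ j =>
          have : t + 1 - (j+1) = t - j := by omega
          rw [this]; exact hones j (by omega)
    · have hc : cntN lam ρ 0 (t+1) = lam := by
        rw [cntN, ha]; simp [step]
      omega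

/-! ## cylinders -/

def Cy (l : List (Fin 3)) : Set (ℕ → Fin 3) :=
  {ρ | ρ 0 = 0 ∧ ∀ j < l.length, ρ (j+1) = l.getD j 0}

def ext0 (l : List (Fin 3)) : ℕ → Fin 3
  | 0 => 0
  | j+1 => l.getD j 0

lemma Cy_eq (l : List (Fin 3)) : Cy l = {ρ | ∀ i ≤ l.length, ρ i = ext0 l i} := by
  ext ρ
  constructor
  · rintro ⟨h0, h⟩ i hi
    cases i with
    | zero => exact h0
    | succ j => exact h j (by omega)
  · intro h
    refine ⟨h 0 (Nat.zero_le _), fun j hj => h (j+1) (by omega)⟩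

lemma measurable_Cy (l : List (Fin 3)) : MeasurableSet (Cy l) := by
  have : Cy l = (fun ρ : ℕ → Fin 3 => ρ 0) ⁻¹' {0} ∩
      ⋂ j ∈ Set.Iio l.length, (fun ρ : ℕ → Fin 3 => ρ (j+1)) ⁻¹' {l.getD j 0} := by
    ext ρ
    simp [Cy]
  rw [this]
  exact ((measurable_pi_apply 0) (measurableSet_singleton _)).inter
    (MeasurableSet.biInter (Set.to_countable _)
      fun j _ => (measurable_pi_apply (j+1)) (measurableSet_singleton _))

end FWAux

/-- In the three-state Markov chain started at `s₁`, for every window size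
`λ ≥ 1` the fixed window parity objective `FW(λ)` has probability 0. -/
theorem fw_parity_prob_zero (μ : Measure (ℕ → Fin 3)) [IsProbabilityMeasure μ]
    (hμ : ∀ (n : ℕ) (f : ℕ → Fin 3), f 0 = 0 →
      μ {ρ | ∀ i ≤ n, ρ i = f i} = ∏ i ∈ Finset.range n, P3 (f i) (f (i + 1)))
    (lam : ℕ) (hlam : 1 ≤ lam) :
    μ {ρ | ∃ i, ∀ j, i ≤ j → ∃ l, l < lam ∧ Even (prio3 (ρ (j + l))) ∧
        ∀ k, k ≤ l → prio3 (ρ (j + l)) ≤ prio3 (ρ (j + k))} = 0 := by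
  classical
  have hCy : ∀ l : List (Fin 3), μ (FWAux.Cy l) = FWAux.wl 0 l := by
    intro l
    rw [FWAux.Cy_eq, hμ l.length (FWAux.ext0 l) rfl]
    exact FWAux.prod_wl l 0 (FWAux.ext0 l) rfl (fun j hj => rfl)
  have h00 : μ {ρ : ℕ → Fin 3 | ρ 0 = 0} = 1 := by
    have h1 := hμ 0 (fun _ => 0) rfl
    have hs : {ρ : ℕ → Fin 3 | ∀ i ≤ 0, ρ i = (fun _ => (0:Fin 3)) i}
        = {ρ : ℕ → Fin 3 | ρ 0 = 0} := by
      ext ρ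
      simp [Nat.le_zero]
    rw [← hs, h1]
    simp
  have hcompl : μ {ρ : ℕ → Fin 3 | ρ 0 = 0}ᶜ = 0 := by
    have hm : MeasurableSet {ρ : ℕ → Fin 3 | ρ 0 = 0} :=
      (measurable_pi_apply 0) (measurableSet_singleton 0)
    rw [measure_compl hm (measure_ne_top μ _), h00, measure_univ]
    simp
  rw [Set.setOf_exists]
  refine measure_iUnion_null fun i => ?_
  have key : ∀ N : ℕ, μ {ρ : ℕ → Fin 3 | ∀ j, i ≤ j → ∃ l, l < lam ∧ Even (prio3 (ρ (j + l))) ∧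
      ∀ k, k ≤ l → prio3 (ρ (j + l)) ≤ prio3 (ρ (j + k))} ≤ 2⁻¹^N + (FWAux.q lam)^N := by
    intro N
    set R := i + (lam - 1) with hR
    set n := (lam+2)*N + 3 + R with hn
    set A : Finset (Fin n → Fin 3) :=
      Finset.univ.filter (fun v => FWAux.AliveL lam 0 R (List.ofFn v)) with hA
    have hget : ∀ (ρ : ℕ → Fin 3) (v : Fin n → Fin 3), (∀ j : Fin n, v j = ρ ((j:ℕ)+1)) →
        ∀ j < (List.ofFn v).length, ρ (j+1) = (List.ofFn v).getD j 0 := by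
      intro ρ v hv j hj
      rw [List.length_ofFn] at hj
      rw [List.getD_eq_getElem _ _ (by simpa using hj), List.getElem_ofFn]
      exact (hv ⟨j, hj⟩).symm
    have cover : {ρ : ℕ → Fin 3 | ∀ j, i ≤ j → ∃ l, l < lam ∧ Even (prio3 (ρ (j + l))) ∧
        ∀ k, k ≤ l → prio3 (ρ (j + l)) ≤ prio3 (ρ (j + k))} ⊆
        (⋃ v ∈ A, FWAux.Cy (List.ofFn v)) ∪ {ρ : ℕ → Fin 3 | ρ 0 = 0}ᶜ := by
      intro ρ hρ
      by_cases hz : ρ 0 = 0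
      swap
      · exact Or.inr hz
      left
      set v : Fin n → Fin 3 := fun j => ρ ((j:ℕ)+1) with hv
      have hvj : ∀ j : Fin n, v j = ρ ((j:ℕ)+1) := fun _ => rfl
      refine Set.mem_iUnion₂.mpr ⟨v, ?_, ?_⟩
      · refine Finset.mem_filter.mpr ⟨Finset.mem_univ _, ?_⟩
        by_contra hAl
        rw [FWAux.AliveL] at hAl
        push_neg at hAl
        obtain ⟨t, ht, hRt, hcnt⟩ := hAl
        rw [List.length_ofFn] at ht
        have hcn : FWAux.cntN lam ρ 0 t = lam - 1 := by
          rw [← FWAux.cntL_eq_cntN lam (List.ofFn v) 0 ρ (hget ρ v hvj) t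
            (by simpa [List.length_ofFn] using ht)]
          exact hcnt
        have hlt : FWAux.cntN lam ρ 0 t < lam := by omega
        obtain ⟨hct, hz0, hones⟩ := FWAux.struct lam ρ hz t hlt
        rw [hcn] at hct hz0 hones
        set t0 := t - (lam - 1) with ht0
        obtain ⟨l, hl, heven, hminp⟩ := hρ t0 (by omega)
        cases l with
        | zero =>
          have hq : ρ (t0 + 0) = 0 := by simpa using hz0
          rw [hq] at heven
          exact (by decide : ¬ Even (prio3 0)) heven
        | succ l' =>
          have h1 : ρ (t0 + (l'+1)) = 1 := by
            have hh := hones (lam - 1 - (l'+1)) (by omega)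
            have harith : t - (lam - 1 - (l'+1)) = t0 + (l'+1) := by omega
            rw [harith] at hh
            exact hh
          have h3 : ρ (t0 + 0) = 0 := by simpa using hz0
          have h2 := hminp 0 (Nat.zero_le _)
          rw [h1, h3] at h2
          exact absurd h2 (by decide)
      · exact ⟨hz, fun j hj => hget ρ v hvj j hj⟩
    calc μ {ρ : ℕ → Fin 3 | ∀ j, i ≤ j → ∃ l, l < lam ∧ Even (prio3 (ρ (j + l))) ∧
          ∀ k, k ≤ l → prio3 (ρ (j + l)) ≤ prio3 (ρ (j + k))}
        ≤ μ ((⋃ v ∈ A, FWAux.Cy (List.ofFn v)) ∪ {ρ : ℕ → Fin 3 | ρ 0 = 0}ᶜ) :=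
          measure_mono cover
      _ ≤ μ (⋃ v ∈ A, FWAux.Cy (List.ofFn v)) + μ ({ρ : ℕ → Fin 3 | ρ 0 = 0}ᶜ) :=
          measure_union_le _ _
      _ ≤ (∑ v ∈ A, μ (FWAux.Cy (List.ofFn v))) + 0 :=
          add_le_add (measure_biUnion_finset_le A _) hcompl.le
      _ = ∑ v ∈ A, FWAux.wl 0 (List.ofFn v) := by
          rw [add_zero]
          exact Finset.sum_congr rfl fun w _ => hCy _
      _ = ∑ v : Fin n → Fin 3,
            if FWAux.AliveL lam 0 R (List.ofFn v) then FWAux.wl 0 (List.ofFn v) else 0 :=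
          Finset.sum_filter _ _
      _ = FWAux.U lam n 0 0 R := FWAux.sumkey lam n 0 R 0
      _ ≤ 2⁻¹^N + (FWAux.q lam)^N := FWAux.U_final lam hlam R N
  have hEi0 : μ {ρ : ℕ → Fin 3 | ∀ j, i ≤ j → ∃ l, l < lam ∧ Even (prio3 (ρ (j + l))) ∧
      ∀ k, k ≤ l → prio3 (ρ (j + l)) ≤ prio3 (ρ (j + k))} ≤ 0 :=
    ge_of_tendsto (FWAux.bound_tendsto lam hlam) (Filter.Eventually.of_forall key)
  exact le_antisymm hEi0 zero_le
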